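/- Let P = {p₁,p₂,p₃,p₄} be the poset with relations p₁ ≼ p₂ ≼ p₃ and p₂ ≼ p₄. Then F = E*_{p₁,p₃} + E*_{p₁,p₄} + E*_{p₂,p₄} is a Frobenius functional on g_A(P), and the spectrum of g_A(P) is binary: ad(F̂) has eigenvalue 0 with multiplicity 4 and eigenvalue 1 with multiplicity 4. -/

import Mathlib

/-!
Common definitions: for a finite poset `P`, identified with `{1,…,n}` via a linear
extension, represented by a relation `le` on `Fin n`, the type-A Lie poset algebra
`gA le` is the Lie subalgebra of `sl(n, ℂ)` spanned by the matrix units `E p q`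
for `p ≺ q` together with all trace-zero diagonal matrices (here realized as a
submodule of complex `n × n` matrices, which is closed under the commutator
bracket).  `gFull le` is the full Lie poset algebra `g(P)` (with all diagonal
matrices).  `FS S` is the functional `F_S = ∑_{(p,q) ∈ S} E*_{p,q}`.
-/

namespace LiePosets

noncomputable section

open scoped BigOperators

/-- Complex `n × n` matrices. -/
abbrev M (n : ℕ) : Type := Matrix (Fin n) (Fin n) ℂ

/-- The strict relation `p ≺ q` attached to a poset relation `le`. -/
def Strict {n : ℕ} (le : Fin n → Fin n → Prop) (p q : Fin n) : Prop := le p q ∧ p ≠ q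

/-- The type-A Lie poset algebra `g_A(P)`: trace-zero matrices supported on
relations of the poset (off-diagonal entries vanish off the strict relations). -/
def gA {n : ℕ} (le : Fin n → Fin n → Prop) : Submodule ℂ (M n) where
  carrier := {A | Matrix.trace A = 0 ∧ ∀ p q : Fin n, p ≠ q → ¬ le p q → A p q = 0}
  add_mem' := by
    rintro A B ⟨hA, hA'⟩ ⟨hB, hB'⟩
    exact ⟨by simp [hA, hB], fun p q h1 h2 => by
      simp [Matrix.add_apply, hA' p q h1 h2, hB' p q h1 h2]⟩
  zero_mem' := ⟨by simp, fun p q _ _ => by simp⟩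
  smul_mem' := by
    rintro c A ⟨hA, hA'⟩
    exact ⟨by simp [hA], fun p q h1 h2 => by
      simp [Matrix.smul_apply, hA' p q h1 h2]⟩

/-- The Lie poset algebra `g(P)` (all diagonal matrices allowed). -/
def gFull {n : ℕ} (le : Fin n → Fin n → Prop) : Submodule ℂ (M n) where
  carrier := {A | ∀ p q : Fin n, p ≠ q → ¬ le p q → A p q = 0}
  add_mem' := by
    rintro A B hA hB p q h1 h2
    simp [Matrix.add_apply, hA p q h1 h2, hB p q h1 h2]
  zero_mem' := fun p q _ _ => by simp
  smul_mem' := by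
    rintro c A hA p q h1 h2
    simp [Matrix.smul_apply, hA p q h1 h2]

/-- The functional `F_S = ∑_{(p,q) ∈ S} E*_{p,q}` reading off the sum of the
coefficients of the matrix entries indexed by `S`. -/
def FS {n : ℕ} (S : Finset (Fin n × Fin n)) : M n →ₗ[ℂ] ℂ where
  toFun A := ∑ pq ∈ S, A pq.1 pq.2
  map_add' A B := by simp [Matrix.add_apply, Finset.sum_add_distrib]
  map_smul' c A := by simp [Matrix.smul_apply, Finset.mul_sum]

/-- `F` is a Frobenius functional on the Lie subalgebra (submodule) `g`:
the kernel of the Kirillov form `B_F(x, y) = F ⁅x, y⁆` on `g` is trivial. -/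
def IsFrobeniusOn {n : ℕ} (g : Submodule ℂ (M n)) (F : M n →ₗ[ℂ] ℂ) : Prop :=
  ∀ x ∈ g, (∀ y ∈ g, F ⁅x, y⁆ = 0) → x = 0

/-- `H` is a principal element for `F` on `g`:  `B_F(H, ·) = F` on `g`. -/
def IsPrincipal {n : ℕ} (g : Submodule ℂ (M n)) (F : M n →ₗ[ℂ] ℂ) (H : M n) : Prop :=
  H ∈ g ∧ ∀ y ∈ g, F ⁅H, y⁆ = F y

/-- The adjoint action `ad H = ⁅H, -⁆` as a linear endomorphism of matrices. -/
def adE {n : ℕ} (H : M n) : Module.End ℂ (M n) :=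
  LinearMap.mulLeft ℂ H - LinearMap.mulRight ℂ H

/-- Multiplicity of `μ` as an eigenvalue of `ad H` acting on `g`. -/
def eigMult {n : ℕ} (g : Submodule ℂ (M n)) (H : M n) (μ : ℂ) : ℕ :=
  Module.finrank ℂ ↥(g ⊓ Module.End.eigenspace (adE H) μ)

/-- `g` has a binary spectrum: for any Frobenius functional `F` and corresponding
principal element `H`, the multiset of eigenvalues of `ad H` on `g` consists of an
equal number of `0`'s and `1`'s. -/
def HasBinarySpectrum {n : ℕ} (g : Submodule ℂ (M n)) : Prop :=
  ∀ (F : M n →ₗ[ℂ] ℂ) (H : M n), IsFrobeniusOn g F → IsPrincipal g F H →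
    eigMult g H 0 = eigMult g H 1 ∧
    eigMult g H 0 + eigMult g H 1 = Module.finrank ℂ ↥g

/-- The kernel of the Kirillov form `B_F` on `g`. -/
def kirKer {n : ℕ} (g : Submodule ℂ (M n)) (F : M n →ₗ[ℂ] ℂ) : Submodule ℂ (M n) where
  carrier := {x | x ∈ g ∧ ∀ y ∈ g, F ⁅x, y⁆ = 0}
  zero_mem' := ⟨g.zero_mem, fun y _ => by
    change F (0 * y - y * 0) = 0
    rw [zero_mul, mul_zero, sub_zero, map_zero]⟩
  add_mem' := by
    rintro a b ⟨ha, ha'⟩ ⟨hb, hb'⟩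
    exact ⟨g.add_mem ha hb, fun y hy => by
      have h1 : F (a * y - y * a) = 0 := ha' y hy
      have h2 : F (b * y - y * b) = 0 := hb' y hy
      change F ((a + b) * y - y * (a + b)) = 0
      rw [add_mul, mul_add, add_sub_add_comm, map_add, h1, h2, add_zero]⟩
  smul_mem' := by
    rintro c a ⟨ha, ha'⟩
    exact ⟨g.smul_mem c ha, fun y hy => by
      have h1 : F (a * y - y * a) = 0 := ha' y hy
      change F ((c • a) * y - y * (c • a)) = 0
      rw [smul_mul_assoc, mul_smul_comm, ← smul_sub, map_smul, h1, smul_zero]⟩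

/-- The index of the Lie algebra `g`: the minimum over all functionals of the
dimension of the kernel of the corresponding Kirillov form. -/
def lieIndex {n : ℕ} (g : Submodule ℂ (M n)) : ℕ :=
  sInf {d : ℕ | ∃ F : M n →ₗ[ℂ] ℂ, d = Module.finrank ℂ ↥(kirKer g F)}

/-- The underlying undirected graph of the directed graph `Γ_{F_S}`. -/
def gammaGraph {n : ℕ} (S : Finset (Fin n × Fin n)) : SimpleGraph (Fin n) where
  Adj p q := p ≠ q ∧ ((p, q) ∈ S ∨ (q, p) ∈ S)
  symm := ⟨fun p q h => ⟨h.1.symm, h.2.symm⟩⟩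
  loopless := ⟨fun p h => h.1 rfl⟩

/-- `F_S` is small: `S` consists of strict relations of the poset and `Γ_{F_S}`
is a spanning tree of the comparability graph. -/
def Small {n : ℕ} (le : Fin n → Fin n → Prop) (S : Finset (Fin n × Fin n)) : Prop :=
  (∀ pq ∈ S, Strict le pq.1 pq.2) ∧ (gammaGraph S).IsTree

/-- `U_{F_S}(P)`: the sinks of `Γ_{F_S}`. -/
def sinks {n : ℕ} (S : Finset (Fin n × Fin n)) : Set (Fin n) :=
  {p | (∃ q, (q, p) ∈ S) ∧ ∀ q, (p, q) ∉ S}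

/-- `D_{F_S}(P)`: the sources of `Γ_{F_S}`. -/
def sources {n : ℕ} (S : Finset (Fin n × Fin n)) : Set (Fin n) :=
  {p | (∃ q, (p, q) ∈ S) ∧ ∀ q, (q, p) ∉ S}

/-- `B_{F_S}(P)`: the vertices of `Γ_{F_S}` that are neither sinks nor sources. -/
def betweens {n : ℕ} (S : Finset (Fin n × Fin n)) : Set (Fin n) :=
  {p | (∃ q, (p, q) ∈ S) ∧ ∃ q, (q, p) ∈ S}

/-- `U` is a filter (up-closed set) of the poset. -/
def IsPosetFilter {n : ℕ} (le : Fin n → Fin n → Prop) (U : Set (Fin n)) : Prop :=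
  ∀ p ∈ U, ∀ q, le p q → q ∈ U

/-- `D` is an order ideal (down-closed set) of the poset. -/
def IsPosetIdeal {n : ℕ} (le : Fin n → Fin n → Prop) (D : Set (Fin n)) : Prop :=
  ∀ p ∈ D, ∀ q, le q p → q ∈ D

/-- Helper to build elements of `Fin n` from natural numbers. -/
def fmk (n : ℕ) (h : 0 < n) (i : ℕ) : Fin n := ⟨i % n, Nat.mod_lt _ h⟩

/-- Restriction of a matrix along an embedding of index types. -/
def restrictMat {N K : ℕ} (f : Fin K → Fin N) (B : M N) : M K :=
  Matrix.of fun p q => B (f p) (f q)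

/-- The poset `P₂ = {p₁,p₂,p₃,p₄}` with `p₁ ≼ p₂ ≼ p₃, p₄`
(elements `pᵢ` indexed as `i - 1 : Fin 4`). -/
def leP2 : Fin 4 → Fin 4 → Prop := fun p q =>
  p = q ∨ (p.val, q.val) ∈ ({(0,1),(0,2),(0,3),(1,2),(1,3)} : Set (ℕ × ℕ))

/-- The index set of `F = E*_{p₁,p₃} + E*_{p₁,p₄} + E*_{p₂,p₄}`. -/
def SP2 : Finset (Fin 4 × Fin 4) := {(0,2),(0,3),(1,3)}


lemma trace_four (A : M 4) :
    Matrix.trace A = A 0 0 + A 1 1 + A 2 2 + A 3 3 := by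
  simp [Matrix.trace, Fin.sum_univ_four, Matrix.diag]

lemma mem_gA_P2 (A : M 4) :
    A ∈ gA leP2 ↔ A 0 0 + A 1 1 + A 2 2 + A 3 3 = 0 ∧
      A 1 0 = 0 ∧ A 2 0 = 0 ∧ A 2 1 = 0 ∧ A 2 3 = 0 ∧
      A 3 0 = 0 ∧ A 3 1 = 0 ∧ A 3 2 = 0 := by
  constructor
  · rintro ⟨ht, h⟩
    rw [trace_four] at ht
    refine ⟨ht, ?_, ?_, ?_, ?_, ?_, ?_, ?_⟩ <;>
      · apply h <;> simp [leP2, Fin.ext_iff, Prod.ext_iff] <;> decide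
  · rintro ⟨ht, h10, h20, h21, h23, h30, h31, h32⟩
    refine ⟨by rw [trace_four]; exact ht, ?_⟩
    intro p q hpq hle
    fin_cases p <;> fin_cases q <;> simp_all [leP2, Fin.ext_iff, Prod.ext_iff]

lemma FS_SP2 (A : M 4) : FS SP2 A = A 0 2 + A 0 3 + A 1 3 := by
  show ∑ pq ∈ SP2, A pq.1 pq.2 = _
  rw [show SP2 = {(0,2),(0,3),(1,3)} from rfl]
  rw [Finset.sum_insert (by decide), Finset.sum_insert (by decide),
    Finset.sum_singleton]
  show A 0 2 + (A 0 3 + A 1 3) = _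
  ring

set_option maxHeartbeats 1000000 in
lemma frob_aux (x : M 4) (hx : x ∈ gA leP2)
    (h : ∀ y ∈ gA leP2, FS SP2 ⁅x, y⁆ = 0) : x = 0 := by
  rw [mem_gA_P2] at hx
  obtain ⟨ht, h10, h20, h21, h23, h30, h31, h32⟩ := hx
  have e1 := h !![0,1,0,0;0,0,0,0;0,0,0,0;0,0,0,0] (by rw [mem_gA_P2]; simp [Matrix.cons_val])
  have e2 := h !![0,0,1,0;0,0,0,0;0,0,0,0;0,0,0,0] (by rw [mem_gA_P2]; simp [Matrix.cons_val])
  have e3 := h !![0,0,0,1;0,0,0,0;0,0,0,0;0,0,0,0] (by rw [mem_gA_P2]; simp [Matrix.cons_val])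
  have e4 := h !![0,0,0,0;0,0,1,0;0,0,0,0;0,0,0,0] (by rw [mem_gA_P2]; simp [Matrix.cons_val])
  have e5 := h !![0,0,0,0;0,0,0,1;0,0,0,0;0,0,0,0] (by rw [mem_gA_P2]; simp [Matrix.cons_val])
  have e6 := h !![1,0,0,0;0,-1,0,0;0,0,0,0;0,0,0,0] (by rw [mem_gA_P2]; simp [Matrix.cons_val])
  have e7 := h !![0,0,0,0;0,1,0,0;0,0,-1,0;0,0,0,0] (by rw [mem_gA_P2]; simp [Matrix.cons_val])
  have e8 := h !![0,0,0,0;0,0,0,0;0,0,1,0;0,0,0,-1] (by rw [mem_gA_P2]; simp [Matrix.cons_val])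
  rw [Ring.lie_def, FS_SP2] at e1 e2 e3 e4 e5 e6 e7 e8
  simp [Matrix.mul_apply, Matrix.sub_apply, Fin.sum_univ_four, Matrix.vecMul,
    dotProduct, Matrix.cons_val] at e1 e2 e3 e4 e5 e6 e7 e8
  have hx02 : x 0 2 = 0 := by linear_combination (-e6 - 2*e7 + e8)/4
  have hx03 : x 0 3 = 0 := by linear_combination -(e6 + e8)/2
  have hx13 : x 1 3 = 0 := by linear_combination -e7 - hx02
  have hx12 : x 1 2 = 0 := by linear_combination -e1 - hx13
  have hx01 : x 0 1 = 0 := by linear_combination e4 + h23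
  have hd0 : x 0 0 = 0 := by
    linear_combination (ht + 2*e3 + 2*h32 - 2*h10 - e5 + hx01 + e2 + h23)/4
  have hd2 : x 2 2 = 0 := by linear_combination -e2 - h23 + hd0
  have hd3 : x 3 3 = 0 := by linear_combination -e3 - h32 + h10 + hd0
  have hd1 : x 1 1 = 0 := by linear_combination e5 - hx01 + hd3
  ext i j
  fin_cases i <;> fin_cases j <;> simp only [Matrix.zero_apply] <;> assumption

def H0 : M 4 := !![(1:ℂ)/2,0,0,0; 0,1/2,0,0; 0,0,-(1/2),0; 0,0,0,-(1/2)]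

lemma H0_mem : H0 ∈ gA leP2 := by rw [mem_gA_P2]; simp [H0]

lemma H0_princ (y : M 4) : FS SP2 ⁅H0, y⁆ = FS SP2 y := by
  rw [Ring.lie_def, FS_SP2, FS_SP2]
  simp [H0, Matrix.mul_apply, Matrix.sub_apply, Fin.sum_univ_four, Matrix.vecMul, dotProduct, Matrix.cons_val]
  ring

lemma princ_eq (H : M 4) (hH : IsPrincipal (gA leP2) (FS SP2) H) : H = H0 := by
  obtain ⟨hmem, hpr⟩ := hH
  have hsub : H - H0 = 0 := by
    apply frob_aux
    · exact Submodule.sub_mem _ hmem H0_mem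
    · intro y hy
      rw [show ⁅H - H0, y⁆ = ⁅H, y⁆ - ⁅H0, y⁆ by simp only [Ring.lie_def]; noncomm_ring,
          map_sub, hpr y hy, H0_princ, sub_self]
  rw [sub_eq_zero] at hsub
  exact hsub

lemma adE_apply (H A : M 4) : adE H A = H * A - A * H := rfl

def phi0 : (Fin 4 → ℂ) →ₗ[ℂ] M 4 where
  toFun v := !![v 0, v 3, 0, 0; 0, v 1, 0, 0; 0, 0, v 2, 0; 0, 0, 0, -v 0 - v 1 - v 2]
  map_add' a b := by ext i j; fin_cases i <;> fin_cases j <;> simp [Matrix.vecHead, Matrix.vecTail] <;> ring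
  map_smul' c a := by ext i j; fin_cases i <;> fin_cases j <;> simp [Matrix.vecHead, Matrix.vecTail] <;> ring

def phi1 : (Fin 4 → ℂ) →ₗ[ℂ] M 4 where
  toFun v := !![0, 0, v 0, v 1; 0, 0, v 2, v 3; 0, 0, 0, 0; 0, 0, 0, 0]
  map_add' a b := by ext i j; fin_cases i <;> fin_cases j <;> simp [Matrix.vecHead, Matrix.vecTail]
  map_smul' c a := by ext i j; fin_cases i <;> fin_cases j <;> simp [Matrix.vecHead, Matrix.vecTail]

def phig : (Fin 8 → ℂ) →ₗ[ℂ] M 4 where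
  toFun v := !![v 0, v 3, v 4, v 5; 0, v 1, v 6, v 7; 0, 0, v 2, 0;
                0, 0, 0, -v 0 - v 1 - v 2]
  map_add' a b := by ext i j; fin_cases i <;> fin_cases j <;> simp [Matrix.vecHead, Matrix.vecTail] <;> ring
  map_smul' c a := by ext i j; fin_cases i <;> fin_cases j <;> simp [Matrix.vecHead, Matrix.vecTail] <;> ring

lemma phi0_apply (v : Fin 4 → ℂ) : phi0 v =
    !![v 0, v 3, 0, 0; 0, v 1, 0, 0; 0, 0, v 2, 0; 0, 0, 0, -v 0 - v 1 - v 2] := rfl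

lemma phi1_apply (v : Fin 4 → ℂ) : phi1 v =
    !![0, 0, v 0, v 1; 0, 0, v 2, v 3; 0, 0, 0, 0; 0, 0, 0, 0] := rfl

lemma phig_apply (v : Fin 8 → ℂ) : phig v =
    !![v 0, v 3, v 4, v 5; 0, v 1, v 6, v 7; 0, 0, v 2, 0;
       0, 0, 0, -v 0 - v 1 - v 2] := rfl

lemma phi0_inj : Function.Injective phi0 := by
  intro a b hab
  funext i
  fin_cases i
  · simpa [phi0_apply, Matrix.cons_val] using congrFun (congrFun hab 0) 0
  · simpa [phi0_apply, Matrix.cons_val] using congrFun (congrFun hab 1) 1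
  · simpa [phi0_apply, Matrix.cons_val] using congrFun (congrFun hab 2) 2
  · simpa [phi0_apply, Matrix.cons_val] using congrFun (congrFun hab 0) 1

lemma phi1_inj : Function.Injective phi1 := by
  intro a b hab
  funext i
  fin_cases i
  · simpa [phi1_apply, Matrix.cons_val] using congrFun (congrFun hab 0) 2
  · simpa [phi1_apply, Matrix.cons_val] using congrFun (congrFun hab 0) 3
  · simpa [phi1_apply, Matrix.cons_val] using congrFun (congrFun hab 1) 2
  · simpa [phi1_apply, Matrix.cons_val] using congrFun (congrFun hab 1) 3

lemma phig_inj : Function.Injective phig := by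
  intro a b hab
  funext i
  fin_cases i
  · simpa [phig_apply, Matrix.cons_val] using congrFun (congrFun hab 0) 0
  · simpa [phig_apply, Matrix.cons_val] using congrFun (congrFun hab 1) 1
  · simpa [phig_apply, Matrix.cons_val] using congrFun (congrFun hab 2) 2
  · simpa [phig_apply, Matrix.cons_val] using congrFun (congrFun hab 0) 1
  · simpa [phig_apply, Matrix.cons_val] using congrFun (congrFun hab 0) 2
  · simpa [phig_apply, Matrix.cons_val] using congrFun (congrFun hab 0) 3
  · simpa [phig_apply, Matrix.cons_val] using congrFun (congrFun hab 1) 2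
  · simpa [phig_apply, Matrix.cons_val] using congrFun (congrFun hab 1) 3

set_option maxHeartbeats 1000000 in
lemma range_phig : LinearMap.range phig = gA leP2 := by
  apply le_antisymm
  · rintro A ⟨v, rfl⟩
    rw [mem_gA_P2]
    simp [phig_apply, Matrix.cons_val] <;> ring
  · intro A hA
    rw [mem_gA_P2] at hA
    obtain ⟨ht, h10, h20, h21, h23, h30, h31, h32⟩ := hA
    refine ⟨![A 0 0, A 1 1, A 2 2, A 0 1, A 0 2, A 0 3, A 1 2, A 1 3], ?_⟩
    ext i j
    fin_cases i <;> fin_cases j <;>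
      simp only [phig_apply] <;>
      first
        | rfl
        | (symm; assumption)
        | (simp; linear_combination -ht)

lemma eig_entry (H A : M 4) (μ : ℂ) (h : A ∈ Module.End.eigenspace (adE H) μ)
    (i j : Fin 4) : (H * A - A * H) i j = μ * A i j := by
  rw [Module.End.mem_eigenspace_iff] at h
  have := congrFun (congrFun h i) j
  rw [adE_apply] at this
  simpa using this

set_option maxHeartbeats 1000000 in
lemma range_phi0 : LinearMap.range phi0 =
    gA leP2 ⊓ Module.End.eigenspace (adE H0) 0 := by
  apply le_antisymm
  · rintro A ⟨v, rfl⟩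
    constructor
    · rw [SetLike.mem_coe, mem_gA_P2]; simp [phi0_apply, Matrix.cons_val] <;> ring
    · rw [SetLike.mem_coe, Module.End.mem_eigenspace_iff, zero_smul, adE_apply,
        phi0_apply, sub_eq_zero]
      ext i j
      fin_cases i <;> fin_cases j <;>
        simp [H0, Matrix.mul_apply, Fin.sum_univ_four, Matrix.vecMul,
          dotProduct, Matrix.vecHead, Matrix.vecTail] <;> ring
  · rintro A ⟨hg, he⟩
    rw [SetLike.mem_coe, mem_gA_P2] at hg
    obtain ⟨ht, h10, h20, h21, h23, h30, h31, h32⟩ := hg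
    have k02 := eig_entry H0 A 0 he 0 2
    have k03 := eig_entry H0 A 0 he 0 3
    have k12 := eig_entry H0 A 0 he 1 2
    have k13 := eig_entry H0 A 0 he 1 3
    simp [H0, Matrix.mul_apply, Fin.sum_univ_four, Matrix.vecMul, dotProduct, Matrix.vecHead, Matrix.vecTail, h10, h20, h21, h23, h30, h31, h32]
      at k02 k03 k12 k13
    have a02 : A 0 2 = 0 := by first | linear_combination k02 | linear_combination -k02
    have a03 : A 0 3 = 0 := by first | linear_combination k03 | linear_combination -k03
    have a12 : A 1 2 = 0 := by first | linear_combination k12 | linear_combination -k12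
    have a13 : A 1 3 = 0 := by first | linear_combination k13 | linear_combination -k13
    refine ⟨![A 0 0, A 1 1, A 2 2, A 0 1], ?_⟩
    ext i j
    fin_cases i <;> fin_cases j <;>
      simp only [phi0_apply] <;>
      first
        | rfl
        | (symm; assumption)
        | (simp; assumption)
        | (simp; linear_combination -ht)

set_option maxHeartbeats 1000000 in
lemma range_phi1 : LinearMap.range phi1 =
    gA leP2 ⊓ Module.End.eigenspace (adE H0) 1 := by
  apply le_antisymm
  · rintro A ⟨v, rfl⟩
    constructor
    · rw [SetLike.mem_coe, mem_gA_P2]; simp [phi1_apply, Matrix.cons_val]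
    · rw [SetLike.mem_coe, Module.End.mem_eigenspace_iff, one_smul, adE_apply,
        phi1_apply]
      ext i j
      fin_cases i <;> fin_cases j <;>
        simp [H0, Matrix.mul_apply, Fin.sum_univ_four, Matrix.vecMul,
          dotProduct, Matrix.vecHead, Matrix.vecTail] <;> ring
  · rintro A ⟨hg, he⟩
    rw [SetLike.mem_coe, mem_gA_P2] at hg
    obtain ⟨ht, h10, h20, h21, h23, h30, h31, h32⟩ := hg
    have k00 := eig_entry H0 A 1 he 0 0
    have k11 := eig_entry H0 A 1 he 1 1
    have k22 := eig_entry H0 A 1 he 2 2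
    have k33 := eig_entry H0 A 1 he 3 3
    have k01 := eig_entry H0 A 1 he 0 1
    simp [H0, Matrix.mul_apply, Fin.sum_univ_four, Matrix.vecMul, dotProduct, Matrix.vecHead, Matrix.vecTail, h10, h20, h21, h23, h30, h31, h32]
      at k00 k11 k22 k33 k01
    have b00 : A 0 0 = 0 := by first | linear_combination k00 | linear_combination -k00
    have b11 : A 1 1 = 0 := by first | linear_combination k11 | linear_combination -k11
    have b22 : A 2 2 = 0 := by first | linear_combination k22 | linear_combination -k22
    have b33 : A 3 3 = 0 := by first | linear_combination k33 | linear_combination -k33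
    have b01 : A 0 1 = 0 := by first | linear_combination k01 | linear_combination -k01
    refine ⟨![A 0 2, A 0 3, A 1 2, A 1 3], ?_⟩
    ext i j
    fin_cases i <;> fin_cases j <;>
      simp only [phi1_apply] <;>
      first
        | rfl
        | (symm; assumption)

lemma finrank_gA : Module.finrank ℂ ↥(gA leP2) = 8 := by
  rw [← range_phig, LinearMap.finrank_range_of_inj phig_inj]
  simp

lemma eigMult0 : eigMult (gA leP2) H0 0 = 4 := by
  rw [eigMult, ← range_phi0, LinearMap.finrank_range_of_inj phi0_inj]
  simp

lemma eigMult1 : eigMult (gA leP2) H0 1 = 4 := by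
  rw [eigMult, ← range_phi1, LinearMap.finrank_range_of_inj phi1_inj]
  simp

/-- `F` is Frobenius on `g_A(P₂)` and the spectrum is binary:
eigenvalues `0` and `1`, each with multiplicity `4`. -/
theorem P2_frobenius_binary_spectrum :
    IsFrobeniusOn (gA leP2) (FS SP2) ∧
    ∀ H : M 4, IsPrincipal (gA leP2) (FS SP2) H →
      eigMult (gA leP2) H 0 = 4 ∧ eigMult (gA leP2) H 1 = 4 ∧
      eigMult (gA leP2) H 0 + eigMult (gA leP2) H 1 = Module.finrank ℂ ↥(gA leP2) := by
  constructor
  · exact fun x hx h => frob_aux x hx h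
  · intro H hH
    rw [princ_eq H hH]
    rw [eigMult0, eigMult1, finrank_gA]
    exact ⟨rfl, rfl, rfl⟩

end
end LiePosets
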